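/- For every N ≥ 2 and every 0 < α ≤ 1, c_η^N(α) = c_η^2(α): the worst-case conditional mean squared error achievable by N−1 adversarial nodes subject to acceptance probability at least α equals that achievable by a single adversarial node. -/

import Mathlib

open MeasureTheory ProbabilityTheory

noncomputable section

def midN (N : ℕ) (p : ℝ × (Fin (N-1) → ℝ)) : ℝ :=
  (max p.1 (⨆ i, p.2 i) + min p.1 (⨅ i, p.2 i)) / 2

def accN (N : ℕ) (η Δ : ℝ) : Set (ℝ × (Fin (N-1) → ℝ)) :=
  {p | max p.1 (⨆ i, p.2 i) - min p.1 (⨅ i, p.2 i) ≤ η * Δ}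

def PA_N (N : ℕ) (η Δ : ℝ) (μ : Measure ℝ) (ν : Measure (Fin (N-1) → ℝ)) : ℝ :=
  ((μ.prod ν) (accN N η Δ)).toReal

def MSE_N (N : ℕ) (η Δ : ℝ) (μ : Measure ℝ) (ν : Measure (Fin (N-1) → ℝ)) : ℝ :=
  ∫ p, (midN N p) ^ 2 ∂((μ.prod ν)[|accN N η Δ])

def mid2 (p : ℝ × ℝ) : ℝ := (max p.1 p.2 + min p.1 p.2) / 2

def acc2 (η Δ : ℝ) : Set (ℝ × ℝ) := {p | max p.1 p.2 - min p.1 p.2 ≤ η * Δ}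

def PA_2 (η Δ : ℝ) (μ κ : Measure ℝ) : ℝ := ((μ.prod κ) (acc2 η Δ)).toReal

def MSE_2 (η Δ : ℝ) (μ κ : Measure ℝ) : ℝ :=
  ∫ p, (mid2 p) ^ 2 ∂((μ.prod κ)[|acc2 η Δ])

def cN (N : ℕ) (η Δ : ℝ) (μ : Measure ℝ) (α : ℝ) : ℝ :=
  sSup {r | ∃ ν : Measure (Fin (N-1) → ℝ), IsProbabilityMeasure ν ∧
    α ≤ PA_N N η Δ μ ν ∧ r = MSE_N N η Δ μ ν}

def c2 (η Δ : ℝ) (μ : Measure ℝ) (α : ℝ) : ℝ :=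
  sSup {r | ∃ κ : Measure ℝ, IsProbabilityMeasure κ ∧
    α ≤ PA_2 η Δ μ κ ∧ r = MSE_2 η Δ μ κ}

def IsBestResponseN (N : ℕ) (η Δ : ℝ) (μ : Measure ℝ) (QAD : ℝ → ℝ → ℝ)
    (ν : Measure (Fin (N-1) → ℝ)) : Prop :=
  IsProbabilityMeasure ν ∧ 0 < PA_N N η Δ μ ν ∧
    ∀ ν' : Measure (Fin (N-1) → ℝ), IsProbabilityMeasure ν' → 0 < PA_N N η Δ μ ν' →
      QAD (MSE_N N η Δ μ ν') (PA_N N η Δ μ ν') ≤ QAD (MSE_N N η Δ μ ν) (PA_N N η Δ μ ν)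

def IsBestResponse2 (η Δ : ℝ) (μ : Measure ℝ) (QAD : ℝ → ℝ → ℝ) (κ : Measure ℝ) : Prop :=
  IsProbabilityMeasure κ ∧ 0 < PA_2 η Δ μ κ ∧
    ∀ κ' : Measure ℝ, IsProbabilityMeasure κ' → 0 < PA_2 η Δ μ κ' →
      QAD (MSE_2 η Δ μ κ') (PA_2 η Δ μ κ') ≤ QAD (MSE_2 η Δ μ κ) (PA_2 η Δ μ κ)

namespace Stmt7Aux

/-! ### Pointwise lemmas -/

/-- The single-node value replacing a pair (sup, inf) = (S, I). -/
def tval (η Δ S I : ℝ) : ℝ :=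
  if S - I ≤ η*Δ ∧ S ≤ (η+1)*Δ ∧ -((η+1)*Δ) ≤ I then (if 0 ≤ S + I then S else I)
  else (η+2)*Δ

lemma maxmin_le_iff {a b c d K : ℝ} :
    max a b - min c d ≤ K ↔ a ≤ c + K ∧ a ≤ d + K ∧ b ≤ c + K ∧ b ≤ d + K := by
  constructor
  · intro h
    have h1 : a ≤ max a b := le_max_left _ _
    have h2 : b ≤ max a b := le_max_right _ _
    have h3 : min c d ≤ c := min_le_left _ _
    have h4 : min c d ≤ d := min_le_right _ _
    exact ⟨by linarith, by linarith, by linarith, by linarith⟩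
  · rintro ⟨h1, h2, h3, h4⟩
    rcases le_total a b with h | h <;> rcases le_total c d with h' | h' <;>
      simp only [max_eq_left, max_eq_right, min_eq_left, min_eq_right, h, h'] <;> linarith

lemma tval_acc {η Δ : ℝ} (hΔ : 0 < Δ) (hη : 2 ≤ η) {S I n : ℝ} (hIS : I ≤ S) (hn : |n| ≤ Δ) :
    (max n S - min n I ≤ η * Δ) ↔
      (max n (tval η Δ S I) - min n (tval η Δ S I) ≤ η * Δ) := by
  have hn1 := abs_le.1 hn
  have hK2 : 2*Δ ≤ η*Δ := by nlinarith
  rw [maxmin_le_iff, maxmin_le_iff]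
  unfold tval
  by_cases hC : S - I ≤ η*Δ ∧ S ≤ (η+1)*Δ ∧ -((η+1)*Δ) ≤ I
  · rw [if_pos hC]
    obtain ⟨hc1, hc2, hc3⟩ := hC
    by_cases hQ : 0 ≤ S + I
    · rw [if_pos hQ]
      constructor
      · rintro ⟨h1, h2, h3, h4⟩
        exact ⟨h1, by linarith, h3, by linarith⟩
      · rintro ⟨h1, h2, h3, h4⟩
        exact ⟨h1, by linarith, h3, by linarith⟩
    · rw [if_neg hQ]
      constructor
      · rintro ⟨h1, h2, h3, h4⟩
        exact ⟨h1, h2, by linarith, by linarith⟩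
      · rintro ⟨h1, h2, h3, h4⟩
        exact ⟨h1, h2, by linarith, by linarith⟩
  · rw [if_neg hC]
    constructor
    · rintro ⟨h1, h2, h3, h4⟩
      exfalso
      exact hC ⟨by linarith, by nlinarith, by nlinarith⟩
    · rintro ⟨h1, h2, h3, h4⟩
      exfalso
      nlinarith
lemma tval_mid {η Δ : ℝ} (hΔ : 0 < Δ) (hη : 2 ≤ η) {S I n : ℝ} (hIS : I ≤ S) (hn : |n| ≤ Δ)
    (hacc : max n S - min n I ≤ η * Δ) :
    ((max n S + min n I)/2)^2 ≤
      ((max n (tval η Δ S I) + min n (tval η Δ S I))/2)^2 := by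
  have hn1 := abs_le.1 hn
  have hK2 : 2*Δ ≤ η*Δ := by nlinarith
  have hCder : S - I ≤ η*Δ ∧ S ≤ (η+1)*Δ ∧ -((η+1)*Δ) ≤ I := by
    rw [maxmin_le_iff] at hacc
    obtain ⟨h1, h2, h3, h4⟩ := hacc
    exact ⟨by linarith, by nlinarith, by nlinarith⟩
  unfold tval
  rw [if_pos hCder]
  obtain ⟨hc1, hc2, hc3⟩ := hCder
  by_cases hQ : 0 ≤ S + I
  · rw [if_pos hQ]
    rcases le_total n I with h | h
    · rw [min_eq_left h, min_eq_left (h.trans hIS)]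
    · rw [min_eq_right h]
      have hmn : min n S = min n S := rfl
      have h1 : S ≤ max n S := le_max_right _ _
      have h2 : min n I ≤ min n S := min_le_min le_rfl hIS
      have h5 : (0:ℝ) ≤ (max n S + I)/2 := by linarith
      have h6 : (max n S + I)/2 ≤ (max n S + min n S)/2 := by
        have : I ≤ min n S := le_min h hIS
        linarith
      exact pow_le_pow_left₀ h5 h6 2
  · rw [if_neg hQ]
    push_neg at hQ
    rcases le_total S n with h | h
    · rw [max_eq_left h, max_eq_left (hIS.trans h)]
    · rw [max_eq_right h]
      have h1 : min n I ≤ I := min_le_right _ _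
      have h2 : max n I ≤ S := max_le h hIS
      set L := (S + min n I)/2 with hL
      set R := (max n I + min n I)/2 with hR
      have hL0 : L ≤ 0 := by
        have : min n I ≤ I := min_le_right _ _
        simp only [hL]; linarith
      have hRL : R ≤ L := by simp only [hL, hR]; linarith
      nlinarith [mul_nonneg (show (0:ℝ) ≤ L - R by linarith)
        (show (0:ℝ) ≤ -(L + R) by linarith)]

lemma mid_bound {η Δ : ℝ} (hΔ : 0 < Δ) (hη : 2 ≤ η) {M m n : ℝ} (h1 : m ≤ n) (h2 : n ≤ M)
    (h3 : M - m ≤ η*Δ) (h4 : |n| ≤ Δ) : ((M + m)/2)^2 ≤ (Δ + η*Δ/2)^2 := by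
  have hn := abs_le.1 h4
  exact sq_le_sq' (by linarith) (by linarith)

/-! ### Measurability -/

lemma measurable_supx {k : ℕ} : Measurable fun x : Fin k → ℝ => ⨆ i, x i :=
  Measurable.iSup fun i => measurable_pi_apply i

lemma measurable_infx {k : ℕ} : Measurable fun x : Fin k → ℝ => ⨅ i, x i :=
  Measurable.iInf fun i => measurable_pi_apply i

def Tmap (η Δ : ℝ) (N : ℕ) (x : Fin (N-1) → ℝ) : ℝ := tval η Δ (⨆ i, x i) (⨅ i, x i)

lemma measurable_Tmap {η Δ : ℝ} {N : ℕ} : Measurable (Tmap η Δ N) := by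
  have hS : Measurable fun x : Fin (N-1) → ℝ => ⨆ i, x i := measurable_supx
  have hI : Measurable fun x : Fin (N-1) → ℝ => ⨅ i, x i := measurable_infx
  unfold Tmap tval
  apply Measurable.ite
  · have : {x : Fin (N-1) → ℝ | (⨆ i, x i) - (⨅ i, x i) ≤ η*Δ ∧ (⨆ i, x i) ≤ (η+1)*Δ ∧
        -((η+1)*Δ) ≤ (⨅ i, x i)} =
        {x | (⨆ i, x i) - (⨅ i, x i) ≤ η*Δ} ∩ ({x | (⨆ i, x i) ≤ (η+1)*Δ} ∩
          {x | -((η+1)*Δ) ≤ (⨅ i, x i)}) := by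
      ext x; simp [Set.mem_inter_iff, and_assoc]
    rw [this]
    exact ((measurableSet_le (hS.sub hI) measurable_const)).inter
      ((measurableSet_le hS measurable_const).inter (measurableSet_le measurable_const hI))
  · apply Measurable.ite
    · exact measurableSet_le measurable_const (hS.add hI)
    · exact hS
    · exact hI
  · exact measurable_const

lemma measurable_mid2 : Measurable mid2 :=
  ((measurable_fst.max measurable_snd).add (measurable_fst.min measurable_snd)).div_const 2

lemma measurableSet_acc2 {η Δ : ℝ} : MeasurableSet (acc2 η Δ) :=
  measurableSet_le ((measurable_fst.max measurable_snd).sub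
    (measurable_fst.min measurable_snd)) measurable_const

lemma measurable_midN {N : ℕ} : Measurable (midN N) :=
  ((measurable_fst.max (measurable_supx.comp measurable_snd)).add
    (measurable_fst.min (measurable_infx.comp measurable_snd))).div_const 2

lemma measurableSet_accN {η Δ : ℝ} {N' : ℕ} : MeasurableSet (accN N' η Δ) :=
  measurableSet_le ((measurable_fst.max (measurable_supx.comp measurable_snd)).sub
    (measurable_fst.min (measurable_infx.comp measurable_snd))) measurable_const

/-! ### Basic measure facts -/

lemma ae_fst_mem {Δ : ℝ} {γ : Type*} [MeasurableSpace γ] (μ : Measure ℝ)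
    [IsProbabilityMeasure μ] (hμ : μ (Set.Icc (-Δ) Δ) = 1) (ν : Measure γ)
    [IsProbabilityMeasure ν] :
    ∀ᵐ p : ℝ × γ ∂(μ.prod ν), |p.1| ≤ Δ := by
  have h0 : μ (Set.Icc (-Δ) Δ)ᶜ = 0 := (prob_compl_eq_zero_iff measurableSet_Icc).2 hμ
  rw [ae_iff]
  refine measure_mono_null (fun p hp => ?_) (show (μ.prod ν) ((Set.Icc (-Δ) Δ)ᶜ ×ˢ Set.univ) = 0
    by rw [Measure.prod_prod, h0, zero_mul])
  simp only [Set.mem_setOf_eq] at hp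
  refine ⟨fun hmem => hp ?_, Set.mem_univ _⟩
  rw [Set.mem_Icc] at hmem
  exact abs_le.2 ⟨hmem.1, hmem.2⟩

lemma integrable_sq_of_bound {β : Type*} [MeasurableSpace β] (m : Measure β) [IsFiniteMeasure m]
    {f : β → ℝ} (hf : Measurable f) {B : ℝ}
    (hbd : ∀ᵐ p ∂m, f p ^ 2 ≤ B ^ 2) : Integrable (fun p => f p ^ 2) m := by
  refine (integrable_const (B^2)).mono' ((hf.pow_const 2).aestronglyMeasurable) ?_
  filter_upwards [hbd] with p hp
  rw [Real.norm_eq_abs, abs_of_nonneg (sq_nonneg _)]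
  exact hp

lemma cond_sq_le {β : Type*} [MeasurableSpace β] (m : Measure β) [IsFiniteMeasure m]
    {s : Set β} (hs : MeasurableSet s) {f : β → ℝ} (hf : Measurable f) {B : ℝ} (hB : 0 ≤ B)
    (hbd : ∀ᵐ p ∂(m.restrict s), f p ^ 2 ≤ B ^ 2) :
    ∫ p, f p ^ 2 ∂(m[|s]) ≤ B ^ 2 := by
  unfold ProbabilityTheory.cond
  rw [integral_smul_measure, smul_eq_mul]
  have hint : Integrable (fun p => f p ^ 2) (m.restrict s) := integrable_sq_of_bound _ hf hbd
  have h1 : ∫ p, f p ^ 2 ∂(m.restrict s) ≤ B^2 * (m s).toReal := by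
    calc ∫ p, f p ^ 2 ∂(m.restrict s) ≤ ∫ _, B^2 ∂(m.restrict s) :=
          integral_mono_ae hint (integrable_const _) hbd
      _ = B^2 * (m s).toReal := by
          rw [integral_const, smul_eq_mul, measureReal_def, Measure.restrict_apply_univ, mul_comm]
  have h0 : 0 ≤ ∫ p, f p ^ 2 ∂(m.restrict s) := integral_nonneg fun p => sq_nonneg _
  rw [ENNReal.toReal_inv]
  rcases eq_or_ne ((m s).toReal) 0 with hz | hz
  · rw [hz] at h1 ⊢
    simp only [mul_zero] at h1
    rw [inv_zero, zero_mul]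
    positivity
  · have hpos : 0 < (m s).toReal := lt_of_le_of_ne ENNReal.toReal_nonneg (Ne.symm hz)
    calc ((m s).toReal)⁻¹ * ∫ p, f p ^ 2 ∂(m.restrict s)
        ≤ ((m s).toReal)⁻¹ * (B^2 * (m s).toReal) := by
          exact mul_le_mul_of_nonneg_left h1 (by positivity)
      _ = B^2 := by field_simp

end Stmt7Aux

open Stmt7Aux

theorem stmt7 {η Δ : ℝ} (hΔ : 0 < Δ) (hη : 2 ≤ η)
    (μ : Measure ℝ) [IsProbabilityMeasure μ] (hμ : μ (Set.Icc (-Δ) Δ) = 1) :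
    ∀ N : ℕ, 2 ≤ N → ∀ α : ℝ, 0 < α → α ≤ 1 → cN N η Δ μ α = c2 η Δ μ α := by
  intro N hN α hα hα1
  haveI : Nonempty (Fin (N-1)) := ⟨⟨0, by omega⟩⟩
  set B : ℝ := Δ + η*Δ/2 with hBdef
  have hB0 : 0 ≤ B := by rw [hBdef]; nlinarith
  -- the universal bound on MSE_N
  have hMSEN_le : ∀ ν : Measure (Fin (N-1) → ℝ), IsProbabilityMeasure ν →
      MSE_N N η Δ μ ν ≤ B^2 := by
    intro ν hν
    unfold MSE_N
    apply cond_sq_le (B := B) _ measurableSet_accN measurable_midN hB0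
    have hae : ∀ᵐ p : ℝ × (Fin (N-1) → ℝ) ∂((μ.prod ν).restrict (accN N η Δ)), |p.1| ≤ Δ :=
      ae_restrict_of_ae (ae_fst_mem μ hμ ν)
    filter_upwards [hae, ae_restrict_mem measurableSet_accN] with p hp hpm
    exact mid_bound hΔ hη (min_le_left _ _) (le_max_left _ _) hpm hp
  have hMSE2_le : ∀ κ : Measure ℝ, IsProbabilityMeasure κ →
      MSE_2 η Δ μ κ ≤ B^2 := by
    intro κ hκ
    unfold MSE_2
    apply cond_sq_le (B := B) _ measurableSet_acc2 measurable_mid2 hB0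
    have hae : ∀ᵐ p : ℝ × ℝ ∂((μ.prod κ).restrict (acc2 η Δ)), |p.1| ≤ Δ :=
      ae_restrict_of_ae (ae_fst_mem μ hμ κ)
    filter_upwards [hae, ae_restrict_mem measurableSet_acc2] with p hp hpm
    exact mid_bound hΔ hη (min_le_left _ _) (le_max_left _ _) hpm hp
  -- the 2-node to N-node embedding
  have hGmeas : Measurable (fun t : ℝ => (fun _ : Fin (N-1) => t)) :=
    measurable_pi_lambda _ fun _ => measurable_id
  have h2toN : ∀ κ : Measure ℝ, IsProbabilityMeasure κ →
      PA_N N η Δ μ (κ.map (fun t _ => t)) = PA_2 η Δ μ κ ∧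
      MSE_N N η Δ μ (κ.map (fun t _ => t)) = MSE_2 η Δ μ κ := by
    intro κ hκ
    set G : ℝ → (Fin (N-1) → ℝ) := fun t _ => t with hG
    have hmap : μ.prod (κ.map G) = (μ.prod κ).map (Prod.map id G) := by
      rw [← Measure.map_prod_map μ κ measurable_id hGmeas, Measure.map_id]
    have hpre : (Prod.map id G) ⁻¹' (accN N η Δ) = acc2 η Δ := by
      ext p
      simp only [accN, acc2, Set.mem_preimage, Set.mem_setOf_eq, Prod.map, id_eq, hG,
        ciSup_const, ciInf_const]
    have hmid : ∀ p : ℝ × ℝ, midN N (Prod.map id G p) = mid2 p := by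
      intro p
      simp only [midN, mid2, Prod.map, id_eq, hG, ciSup_const, ciInf_const]
    have hFm : Measurable (Prod.map (id : ℝ → ℝ) G) := measurable_id.prodMap hGmeas
    have hmass : (μ.prod (κ.map G)) (accN N η Δ) = (μ.prod κ) (acc2 η Δ) := by
      rw [hmap, Measure.map_apply hFm measurableSet_accN, hpre]
    constructor
    · unfold PA_N PA_2; rw [hmass]
    · unfold MSE_N MSE_2 ProbabilityTheory.cond
      rw [hmass, hmap, integral_smul_measure, integral_smul_measure]
      congr 1
      rw [setIntegral_map measurableSet_accN
        ((measurable_midN.pow_const 2).aestronglyMeasurable) hFm.aemeasurable, hpre]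
      apply setIntegral_congr_fun measurableSet_acc2
      intro p _
      simp only [midN, mid2, Prod.map, id_eq, hG, ciSup_const, ciInf_const]
  -- the N-node to 2-node reduction
  have hNto2 : ∀ ν : Measure (Fin (N-1) → ℝ), IsProbabilityMeasure ν →
      PA_2 η Δ μ (ν.map (Tmap η Δ N)) = PA_N N η Δ μ ν ∧
      MSE_N N η Δ μ ν ≤ MSE_2 η Δ μ (ν.map (Tmap η Δ N)) := by
    intro ν hν
    set T : (Fin (N-1) → ℝ) → ℝ := Tmap η Δ N with hT
    have hTm : Measurable T := measurable_Tmap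
    set F : ℝ × (Fin (N-1) → ℝ) → ℝ × ℝ := Prod.map id T with hF
    have hFm : Measurable F := measurable_id.prodMap hTm
    have hmap : μ.prod (ν.map T) = (μ.prod ν).map F := by
      rw [← Measure.map_prod_map μ ν measurable_id hTm, Measure.map_id]
    have hIS : ∀ x : Fin (N-1) → ℝ, (⨅ i, x i) ≤ (⨆ i, x i) := fun x =>
      (ciInf_le (Finite.bddBelow_range _) (Classical.arbitrary _)).trans
        (le_ciSup (Finite.bddAbove_range _) (Classical.arbitrary _))
    have hiff : ∀ p : ℝ × (Fin (N-1) → ℝ), |p.1| ≤ Δ →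
        (p ∈ accN N η Δ ↔ F p ∈ acc2 η Δ) := by
      intro p hp
      simp only [accN, acc2, Set.mem_setOf_eq, hF, Prod.map, id_eq]
      exact tval_acc hΔ hη (hIS p.2) hp
    have hsets : accN N η Δ =ᵐ[μ.prod ν] F ⁻¹' acc2 η Δ := by
      rw [Filter.eventuallyEq_set]
      filter_upwards [ae_fst_mem μ hμ ν] with p hp
      exact hiff p hp
    have hmass : (μ.prod (ν.map T)) (acc2 η Δ) = (μ.prod ν) (accN N η Δ) := by
      rw [hmap, Measure.map_apply hFm measurableSet_acc2]
      exact (measure_congr hsets).symm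
    constructor
    · unfold PA_2 PA_N; rw [hmass]
    · unfold MSE_N MSE_2 ProbabilityTheory.cond
      rw [hmass, hmap, integral_smul_measure, integral_smul_measure]
      apply mul_le_mul_of_nonneg_left _ ENNReal.toReal_nonneg
      rw [setIntegral_map measurableSet_acc2
        ((measurable_mid2.pow_const 2).aestronglyMeasurable) hFm.aemeasurable]
      rw [setIntegral_congr_set (hsets.symm)]
      -- now compare the two integrals over accN
      have haeb : ∀ᵐ p : ℝ × (Fin (N-1) → ℝ) ∂((μ.prod ν).restrict (accN N η Δ)),
          |p.1| ≤ Δ ∧ p ∈ accN N η Δ := by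
        filter_upwards [ae_restrict_of_ae (ae_fst_mem μ hμ ν),
          ae_restrict_mem measurableSet_accN] with p h1 h2
        exact ⟨h1, h2⟩
      have hbd2 : ∀ᵐ p ∂((μ.prod ν).restrict (accN N η Δ)), mid2 (F p) ^ 2 ≤ B ^ 2 := by
        filter_upwards [haeb] with p hp
        obtain ⟨h1, h2⟩ := hp
        have hacc2 : F p ∈ acc2 η Δ := (hiff p h1).1 h2
        simp only [acc2, Set.mem_setOf_eq] at hacc2
        exact mid_bound hΔ hη (min_le_left _ _) (le_max_left _ _) hacc2 h1
      have hbdN : ∀ᵐ p ∂((μ.prod ν).restrict (accN N η Δ)), midN N p ^ 2 ≤ B ^ 2 := by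
        filter_upwards [haeb] with p hp
        obtain ⟨h1, h2⟩ := hp
        exact mid_bound hΔ hη (min_le_left _ _) (le_max_left _ _) h2 h1
      apply integral_mono_ae
        (integrable_sq_of_bound _ measurable_midN hbdN)
        (integrable_sq_of_bound _ (measurable_mid2.comp hFm) hbd2)
      filter_upwards [haeb] with p hp
      obtain ⟨h1, h2⟩ := hp
      have : ((max p.1 (⨆ i, p.2 i) + min p.1 (⨅ i, p.2 i))/2)^2 ≤
          ((max p.1 (T p.2) + min p.1 (T p.2))/2)^2 :=
        tval_mid hΔ hη (hIS p.2) h1 h2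
      simpa only [midN, mid2, hF, Prod.map, id_eq, Function.comp] using this
  -- nonemptiness witnesses
  have hδ : IsProbabilityMeasure (Measure.dirac (0:ℝ)) := Measure.dirac.isProbabilityMeasure
  have hPAδ : PA_2 η Δ μ (Measure.dirac 0) = 1 := by
    unfold PA_2
    have hsub : Set.Icc (-Δ) Δ ×ˢ ({0} : Set ℝ) ⊆ acc2 η Δ := by
      rintro ⟨n, t⟩ ⟨hn, ht⟩
      simp only [Set.mem_singleton_iff] at ht
      subst ht
      simp only [acc2, Set.mem_setOf_eq]
      rw [Set.mem_Icc] at hn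
      rw [max_sub_min_eq_abs]
      have : |n - 0| ≤ Δ := by rw [sub_zero]; exact abs_le.2 hn
      have h2 : |(0:ℝ) - n| = |n - 0| := abs_sub_comm 0 n
      nlinarith
    have h1 : (μ.prod (Measure.dirac 0)) (Set.Icc (-Δ) Δ ×ˢ ({0} : Set ℝ)) = 1 := by
      rw [Measure.prod_prod, hμ, Measure.dirac_apply_of_mem (Set.mem_singleton 0), one_mul]
    have hle : (1 : ENNReal) ≤ (μ.prod (Measure.dirac 0)) (acc2 η Δ) :=
      h1 ▸ measure_mono hsub
    have := prob_le_one (μ := μ.prod (Measure.dirac 0)) (s := acc2 η Δ)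
    rw [le_antisymm this hle]
    simp
  have hmem2 : MSE_2 η Δ μ (Measure.dirac 0) ∈
      {r | ∃ κ : Measure ℝ, IsProbabilityMeasure κ ∧ α ≤ PA_2 η Δ μ κ ∧ r = MSE_2 η Δ μ κ} :=
    ⟨Measure.dirac 0, hδ, by rw [hPAδ]; exact hα1, rfl⟩
  have hne2 : {r | ∃ κ : Measure ℝ, IsProbabilityMeasure κ ∧ α ≤ PA_2 η Δ μ κ ∧
      r = MSE_2 η Δ μ κ}.Nonempty := ⟨_, hmem2⟩
  have hbdd2 : BddAbove {r | ∃ κ : Measure ℝ, IsProbabilityMeasure κ ∧ α ≤ PA_2 η Δ μ κ ∧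
      r = MSE_2 η Δ μ κ} := by
    refine ⟨B^2, ?_⟩
    rintro r ⟨κ, hκ, _, rfl⟩
    exact hMSE2_le κ hκ
  have hbddN : BddAbove {r | ∃ ν : Measure (Fin (N-1) → ℝ), IsProbabilityMeasure ν ∧
      α ≤ PA_N N η Δ μ ν ∧ r = MSE_N N η Δ μ ν} := by
    refine ⟨B^2, ?_⟩
    rintro r ⟨ν, hν, _, rfl⟩
    exact hMSEN_le ν hν
  have hneN : {r | ∃ ν : Measure (Fin (N-1) → ℝ), IsProbabilityMeasure ν ∧
      α ≤ PA_N N η Δ μ ν ∧ r = MSE_N N η Δ μ ν}.Nonempty := by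
    obtain ⟨hP, hM⟩ := h2toN (Measure.dirac 0) hδ
    haveI : IsProbabilityMeasure ((Measure.dirac (0:ℝ)).map (fun t _ => t)) :=
      Measure.isProbabilityMeasure_map hGmeas.aemeasurable
    exact ⟨MSE_N N η Δ μ ((Measure.dirac 0).map (fun t _ => t)),
      (Measure.dirac 0).map (fun t _ => t), this, by rw [hP, hPAδ]; exact hα1, rfl⟩
  apply le_antisymm
  · -- cN ≤ c2
    apply csSup_le hneN
    rintro r ⟨ν, hν, hPA, rfl⟩
    haveI := hν
    obtain ⟨hPAeq, hMSEle⟩ := hNto2 ν hν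
    haveI : IsProbabilityMeasure (ν.map (Tmap η Δ N)) :=
      Measure.isProbabilityMeasure_map measurable_Tmap.aemeasurable
    exact hMSEle.trans (le_csSup hbdd2 ⟨ν.map (Tmap η Δ N), this, by rw [hPAeq]; exact hPA, rfl⟩)
  · -- c2 ≤ cN
    apply csSup_le hne2
    rintro r ⟨κ, hκ, hPA, rfl⟩
    haveI := hκ
    obtain ⟨hPAeq, hMSEeq⟩ := h2toN κ hκ
    haveI : IsProbabilityMeasure (κ.map (fun t (_ : Fin (N-1)) => t)) :=
      Measure.isProbabilityMeasure_map hGmeas.aemeasurable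
    exact le_csSup hbddN ⟨κ.map (fun t _ => t), this, by rw [hPAeq]; exact hPA, hMSEeq.symm⟩
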